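/- Hölder convolution relation in weight 3: ζ(3) = δ_{2,1} + (ln 2)³/2 + δ₂·ln 2 + δ₃, where δ_{2,1} = ∑_{n>m≥1} (1/2)ⁿ/(n²m), δ₂ = Li₂(1/2), δ₃ = Li₃(1/2). -/

import Mathlib

open Filter Set Real Finset Topology

/-- Harmonic numbers. -/
noncomputable def Hm (n : ℕ) : ℝ := ∑ k ∈ Finset.range n, 1 / ((k : ℝ) + 1)

lemma Hm_nonneg (n : ℕ) : 0 ≤ Hm n :=
  Finset.sum_nonneg fun k _ => by positivity

lemma Hm_le (n : ℕ) : Hm n ≤ n := by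
  calc Hm n ≤ ∑ k ∈ Finset.range n, (1 : ℝ) := by
        refine Finset.sum_le_sum fun k _ => ?_
        rw [div_le_one (by positivity)]
        linarith [Nat.cast_nonneg (α := ℝ) k]
    _ = n := by simp

lemma Hm_succ (n : ℕ) : Hm (n + 1) = Hm n + 1 / ((n : ℝ) + 1) := by
  simp [Hm, Finset.sum_range_succ]

/-- Generic power series (starting from exponent 1). -/
noncomputable def P (a : ℕ → ℝ) (x : ℝ) : ℝ := ∑' n : ℕ, a n * x ^ (n + 1)

lemma P_summable {a : ℕ → ℝ} (ha : ∀ n, |a n| ≤ 1) {x : ℝ} (hx : |x| < 1) :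
    Summable (fun n => a n * x ^ (n + 1)) := by
  refine Summable.of_norm_bounded (g := fun n => |x| ^ (n + 1)) ?_ ?_
  · exact ((summable_geometric_of_lt_one (abs_nonneg x) hx).mul_left |x|).congr
      (fun n => by rw [pow_succ, mul_comm])
  · intro n
    rw [norm_mul, norm_pow, Real.norm_eq_abs, Real.norm_eq_abs]
    calc |a n| * |x| ^ (n + 1) ≤ 1 * |x| ^ (n + 1) := by
          apply mul_le_mul_of_nonneg_right (ha n) (by positivity)
      _ = |x| ^ (n + 1) := one_mul _

lemma P_hasSum {a : ℕ → ℝ} (ha : ∀ n, |a n| ≤ 1) {x : ℝ} (hx : |x| < 1) :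
    HasSum (fun n => a n * x ^ (n + 1)) (P a x) :=
  (P_summable ha hx).hasSum

lemma P_hasDerivAt {a : ℕ → ℝ} (ha : ∀ n, |a n| ≤ 1) {x : ℝ} (hx : |x| < 1) :
    HasDerivAt (P a) (∑' n : ℕ, ((n : ℝ) + 1) * a n * x ^ n) x := by
  set r : ℝ := (1 + |x|) / 2 with hr
  have hxr : |x| < r := by rw [hr]; linarith
  have hr1 : r < 1 := by rw [hr]; linarith
  have hr0 : 0 < r := lt_of_le_of_lt (abs_nonneg x) hxr
  have hopen : IsOpen (Ioo (-r) r) := isOpen_Ioo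
  have hxmem : x ∈ Ioo (-r) r := abs_lt.mp hxr
  have hu : Summable (fun n : ℕ => ((n : ℝ) + 1) * r ^ n) := by
    have h1 : Summable (fun n : ℕ => (n : ℝ) * r ^ n) := by
      have := summable_pow_mul_geometric_of_norm_lt_one (R := ℝ) 1
        (r := r) (by rwa [Real.norm_eq_abs, abs_of_pos hr0])
      simpa using this
    have h2 : Summable (fun n : ℕ => r ^ n) :=
      summable_geometric_of_lt_one hr0.le hr1
    simpa [add_mul] using h1.add h2
  refine hasDerivAt_of_tendstoUniformlyOn (l := atTop) (g := P a)
    (g' := fun y => ∑' n : ℕ, ((n : ℝ) + 1) * a n * y ^ n) hopen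
    (f := fun N y => ∑ n ∈ Finset.range N, a n * y ^ (n + 1))
    (f' := fun N y => ∑ n ∈ Finset.range N, ((n : ℝ) + 1) * a n * y ^ n)
    ?_ ?_ ?_ hxmem
  · refine tendstoUniformlyOn_tsum_nat hu ?_
    intro n y hy
    have hyr : |y| ≤ r := by
      rcases hy with ⟨h1, h2⟩; rw [abs_le]; constructor <;> linarith
    rw [Real.norm_eq_abs, abs_mul, abs_mul]
    have h1 : |a n| * |y ^ n| ≤ r ^ n := by
      calc |a n| * |y ^ n| ≤ 1 * |y| ^ n := by
            rw [abs_pow]; exact mul_le_mul (ha n) le_rfl (by positivity) zero_le_one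
        _ = |y| ^ n := one_mul _
        _ ≤ r ^ n := pow_le_pow_left₀ (abs_nonneg y) hyr n
    rw [mul_assoc]
    calc |((n : ℝ) + 1)| * (|a n| * |y ^ n|) ≤ |((n : ℝ) + 1)| * r ^ n := by
          apply mul_le_mul_of_nonneg_left h1 (abs_nonneg _)
      _ = ((n : ℝ) + 1) * r ^ n := by rw [abs_of_pos (by positivity)]
  · filter_upwards with N y _
    refine HasDerivAt.fun_sum fun n _ => ?_
    have h := (hasDerivAt_pow (n + 1) y).const_mul (a n)
    refine h.congr_deriv ?_
    push_cast
    ring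
  · intro y hy
    have hy1 : |y| < 1 := by
      rcases hy with ⟨h1, h2⟩; rw [abs_lt]; constructor <;> linarith
    exact (P_hasSum ha hy1).tendsto_sum_nat

lemma P_zero (a : ℕ → ℝ) : P a 0 = 0 := by
  simp [P]

lemma P_continuousOn {a : ℕ → ℝ} (ha : Summable fun n => |a n|) :
    ContinuousOn (P a) (Icc (-1 : ℝ) 1) := by
  have h : TendstoUniformlyOn (fun N x => ∑ n ∈ Finset.range N, a n * x ^ (n + 1))
      (P a) atTop (Icc (-1 : ℝ) 1) := by
    refine tendstoUniformlyOn_tsum_nat ha ?_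
    intro n y hy
    have hy1 : |y| ≤ 1 := abs_le.mpr ⟨hy.1, hy.2⟩
    rw [Real.norm_eq_abs, abs_mul, abs_pow]
    calc |a n| * |y| ^ (n + 1) ≤ |a n| * 1 := by
          apply mul_le_mul_of_nonneg_left _ (abs_nonneg _)
          exact pow_le_one₀ (abs_nonneg y) hy1
      _ = |a n| := mul_one _
  exact h.continuousOn (Frequently.of_forall fun N =>
    (Continuous.continuousOn (by fun_prop)))

/-- Constancy principle from vanishing derivative on `(0,1)` plus a right limit at `0`. -/
lemma const_from_deriv {f : ℝ → ℝ} {c : ℝ}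
    (hd : ∀ x ∈ Ioo (0 : ℝ) 1, HasDerivAt f 0 x)
    (hl : Tendsto f (𝓝[>] (0 : ℝ)) (𝓝 c)) {b : ℝ} (hb : b ∈ Ioo (0 : ℝ) 1) :
    f b = c := by
  have key : ∀ t ∈ Ioo (0 : ℝ) b, f b = f t := by
    intro t ht
    have hsub : Icc t b ⊆ Ioo (0 : ℝ) 1 := fun y hy =>
      ⟨lt_of_lt_of_le ht.1 hy.1, lt_of_le_of_lt hy.2 hb.2⟩
    have := constant_of_has_deriv_right_zero
      (f := f) (a := t) (b := b)
      (fun y hy => (hd y (hsub hy)).continuousAt.continuousWithinAt)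
      (fun y hy => ((hd y (hsub ⟨hy.1, hy.2.le⟩)).hasDerivWithinAt))
    exact this b ⟨ht.2.le, le_rfl⟩
  have hev : ∀ᶠ t in 𝓝[>] (0 : ℝ), f t = f b := by
    filter_upwards [Ioo_mem_nhdsGT_of_mem ⟨le_refl (0 : ℝ), hb.1⟩] with t ht
    exact (key t ht).symm
  have h1 : Tendsto f (𝓝[>] (0 : ℝ)) (𝓝 (f b)) :=
    Tendsto.congr' (by filter_upwards [hev] with t ht; exact ht.symm)
      (tendsto_const_nhds (α := ℝ) (f := 𝓝[>] (0:ℝ)))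
  exact tendsto_nhds_unique h1 hl

/-- The limit `log x * log(1-x)^2 → 0` as `x → 0⁺`. -/
lemma log_log_sq_tendsto :
    Tendsto (fun x : ℝ => Real.log x * (Real.log (1 - x)) ^ 2) (𝓝[>] (0 : ℝ)) (𝓝 0) := by
  have hmain : Tendsto (fun x : ℝ => -4 * (Real.log x * x ^ (2 : ℝ))) (𝓝[>] (0 : ℝ)) (𝓝 0) := by
    have := (tendsto_log_mul_rpow_nhdsGT_zero (r := 2) (by norm_num)).const_mul (-4)
    simpa using this
  refine squeeze_zero_norm' ?_ hmain
  filter_upwards [Ioo_mem_nhdsGT_of_mem (⟨le_refl (0:ℝ), by norm_num⟩ : (0:ℝ) ∈ Ico (0:ℝ) (1/2))]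
    with x hx
  obtain ⟨hx0, hxh⟩ := hx
  have hx1 : x < 1 := by linarith
  have hlogx : Real.log x ≤ 0 := Real.log_nonpos hx0.le (by linarith)
  have hlog1x : Real.log (1 - x) ≤ 0 := Real.log_nonpos (by linarith) (by linarith)
  -- |log(1-x)| ≤ 2x
  have hbound : -Real.log (1 - x) ≤ 2 * x := by
    have hexp : Real.exp (-(2 * x)) ≤ 1 - x := by
      have h1 : Real.exp (-(2 * x)) = 1 / Real.exp (2 * x) := by
        rw [Real.exp_neg]; rw [inv_eq_one_div]
      have h2 : (1 : ℝ) + 2 * x ≤ Real.exp (2 * x) := by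
        have := Real.add_one_le_exp (2 * x); linarith
      have h3 : 1 / Real.exp (2 * x) ≤ 1 / (1 + 2 * x) := by
        apply div_le_div_of_nonneg_left one_pos.le (by linarith) h2
      have h4 : 1 / (1 + 2 * x) ≤ 1 - x := by
        rw [div_le_iff₀ (by linarith)]
        nlinarith
      linarith [h1 ▸ le_trans h3 h4]
    have := Real.log_le_log (Real.exp_pos _) hexp
    rw [Real.log_exp] at this
    linarith
  rw [Real.norm_eq_abs, abs_mul, abs_of_nonpos hlogx, abs_pow, sq_abs]
  have h5 : (Real.log (1 - x)) ^ 2 ≤ (2 * x) ^ 2 := by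
    nlinarith [mul_nonneg (by linarith : (0:ℝ) ≤ Real.log (1 - x) + 2 * x)
      (by linarith : (0:ℝ) ≤ 2 * x - Real.log (1 - x))]
  have hrpow : x ^ (2 : ℝ) = x ^ (2 : ℕ) := by
    rw [← Real.rpow_natCast x 2]; norm_num
  calc -Real.log x * (Real.log (1 - x)) ^ 2 ≤ -Real.log x * (2 * x) ^ 2 := by
        apply mul_le_mul_of_nonneg_left h5 (by linarith)
    _ = -4 * (Real.log x * x ^ (2 : ℝ)) := by rw [hrpow]; ring

-- coefficients
noncomputable def c2 : ℕ → ℝ := fun n => 1 / ((n : ℝ) + 1) ^ 2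
noncomputable def c3 : ℕ → ℝ := fun n => 1 / ((n : ℝ) + 1) ^ 3
noncomputable def cA : ℕ → ℝ := fun n => Hm (n + 1) / ((n : ℝ) + 1) ^ 2
noncomputable def ch : ℕ → ℝ := fun n => Hm (n + 1) / ((n : ℝ) + 1)

lemma c2_bound : ∀ n, |c2 n| ≤ 1 := by
  intro n
  have h1 : (1 : ℝ) ≤ (n : ℝ) + 1 := by
    have := Nat.cast_nonneg (α := ℝ) n; linarith
  rw [c2, abs_of_nonneg (by positivity), div_le_one (by positivity)]
  exact one_le_pow₀ h1

lemma c3_bound : ∀ n, |c3 n| ≤ 1 := by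
  intro n
  have h1 : (1 : ℝ) ≤ (n : ℝ) + 1 := by
    have := Nat.cast_nonneg (α := ℝ) n; linarith
  rw [c3, abs_of_nonneg (by positivity), div_le_one (by positivity)]
  exact one_le_pow₀ h1

lemma cA_bound : ∀ n, |cA n| ≤ 1 := by
  intro n
  have h1 : (1 : ℝ) ≤ (n : ℝ) + 1 := by
    have := Nat.cast_nonneg (α := ℝ) n; linarith
  have h2 := Hm_le (n + 1)
  push_cast at h2
  rw [cA, abs_of_nonneg (div_nonneg (Hm_nonneg _) (by positivity)),
    div_le_one (by positivity)]
  nlinarith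

lemma ch_bound : ∀ n, |ch n| ≤ 1 := by
  intro n
  have h2 := Hm_le (n + 1)
  push_cast at h2
  rw [ch, abs_of_nonneg (div_nonneg (Hm_nonneg _) (by positivity)),
    div_le_one (by positivity)]
  linarith

lemma zeta3_def : P c3 1 = ∑' n : ℕ, 1 / ((n : ℝ) + 1) ^ 3 := by
  unfold P c3; simp

lemma mem_abs_lt {x : ℝ} (hx : x ∈ Ioo (0 : ℝ) 1) : |x| < 1 :=
  abs_lt.mpr ⟨by linarith [hx.1], hx.2⟩

lemma d_Li2 {x : ℝ} (hx : x ∈ Ioo (0 : ℝ) 1) :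
    HasDerivAt (P c2) (-Real.log (1 - x) / x) x := by
  have hx1 := mem_abs_lt hx
  have hx0 : x ≠ 0 := ne_of_gt hx.1
  have hd := P_hasDerivAt c2_bound hx1
  have hs := (Real.hasSum_pow_div_log_of_abs_lt_one hx1).div_const x
  have hfun : (fun n : ℕ => x ^ (n + 1) / ((n : ℝ) + 1) / x)
      = fun n : ℕ => ((n : ℝ) + 1) * c2 n * x ^ n := by
    funext n
    have hn : ((n : ℝ) + 1) ≠ 0 := by positivity
    rw [c2, pow_succ]
    field_simp
  rw [hfun] at hs
  rwa [hs.tsum_eq] at hd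

lemma d_Li3 {x : ℝ} (hx : x ∈ Ioo (0 : ℝ) 1) :
    HasDerivAt (P c3) (P c2 x / x) x := by
  have hx1 := mem_abs_lt hx
  have hx0 : x ≠ 0 := ne_of_gt hx.1
  have hd := P_hasDerivAt c3_bound hx1
  have hs := (P_hasSum c2_bound hx1).div_const x
  have hfun : (fun n : ℕ => c2 n * x ^ (n + 1) / x)
      = fun n : ℕ => ((n : ℝ) + 1) * c3 n * x ^ n := by
    funext n
    have hn : ((n : ℝ) + 1) ≠ 0 := by positivity
    rw [c2, c3, pow_succ]
    field_simp
    ring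
  rw [hfun] at hs
  rwa [hs.tsum_eq] at hd

lemma hasSum_H {x : ℝ} (hx : |x| < 1) :
    HasSum (fun n : ℕ => Hm (n + 1) * x ^ (n + 1)) (-Real.log (1 - x) / (1 - x)) := by
  set f : ℕ → ℝ := fun n => x ^ n with hf
  set g : ℕ → ℝ := fun n => x ^ (n + 1) / ((n : ℝ) + 1) with hg
  have hfn : Summable fun n => ‖f n‖ := by
    simpa [hf, abs_pow] using summable_geometric_of_lt_one (abs_nonneg x) hx
  have hgeo : Summable (fun n : ℕ => |x| ^ (n + 1)) := by
    refine ((summable_geometric_of_lt_one (abs_nonneg x) hx).mul_left |x|).congr fun n => ?_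
    rw [pow_succ, mul_comm]
  have hgn : Summable fun n => ‖g n‖ := by
    refine Summable.of_nonneg_of_le (fun n => norm_nonneg _) (fun n => ?_) hgeo
    have hn1 : (1 : ℝ) ≤ (n : ℝ) + 1 := by
      have := Nat.cast_nonneg (α := ℝ) n; linarith
    rw [hg, Real.norm_eq_abs, abs_div, abs_pow]
    calc |x| ^ (n + 1) / |(n : ℝ) + 1| ≤ |x| ^ (n + 1) / 1 := by
          apply div_le_div_of_nonneg_left (by positivity) one_pos
          rw [abs_of_pos (by positivity)]; exact hn1
      _ = |x| ^ (n + 1) := div_one _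
  have key : (fun n : ℕ => ∑ kl ∈ Finset.HasAntidiagonal.antidiagonal n, f kl.1 * g kl.2)
      = fun n : ℕ => Hm (n + 1) * x ^ (n + 1) := by
    funext n
    rw [Finset.Nat.sum_antidiagonal_eq_sum_range_succ_mk]
    have step : ∀ k ∈ Finset.range (n + 1),
        f k * g (n - k) = x ^ (n + 1) * (1 / ((n - k : ℕ) + 1 : ℝ)) := by
      intro k hk
      have hkn : k ≤ n := Nat.lt_succ_iff.mp (Finset.mem_range.mp hk)
      rw [hf, hg]
      have hpow : x ^ k * x ^ (n - k + 1) = x ^ (n + 1) := by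
        rw [← pow_add]
        congr 1
        omega
      rw [← hpow]
      ring
    rw [Finset.sum_congr rfl step, ← Finset.mul_sum, mul_comm]
    congr 1
    rw [Hm, ← Finset.sum_range_reflect (fun j => (1 : ℝ) / ((j : ℝ) + 1)) (n + 1)]
    refine Finset.sum_congr rfl fun k hk => ?_
    have h2 : n + 1 - 1 - k = n - k := by omega
    simp [h2]
  have hsum := (summable_norm_sum_mul_antidiagonal_of_summable_norm hfn hgn).of_norm
  have ht := tsum_mul_tsum_eq_tsum_sum_antidiagonal_of_summable_norm hfn hgn
  rw [key] at hsum ht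
  have hfval : ∑' n, f n = (1 - x)⁻¹ := tsum_geometric_of_abs_lt_one hx
  have hgval : ∑' n, g n = -Real.log (1 - x) :=
    (Real.hasSum_pow_div_log_of_abs_lt_one hx).tsum_eq
  rw [hfval, hgval] at ht
  have := hsum.hasSum
  rw [← ht] at this
  suffices h : -Real.log (1 - x) / (1 - x) = (1 - x)⁻¹ * -Real.log (1 - x) by rw [h]; exact this
  rw [div_eq_mul_inv, mul_comm]

lemma d_h {x : ℝ} (hx : x ∈ Ioo (0 : ℝ) 1) :
    HasDerivAt (P ch) (-Real.log (1 - x) / (x * (1 - x))) x := by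
  have hx1 := mem_abs_lt hx
  have hx0 : x ≠ 0 := ne_of_gt hx.1
  have hx2 : (1 : ℝ) - x ≠ 0 := by
    have := hx.2; intro h; apply absurd this; linarith [sub_eq_zero.mp h]
  have hd := P_hasDerivAt ch_bound hx1
  have hs := (hasSum_H hx1).div_const x
  have hfun : (fun n : ℕ => Hm (n + 1) * x ^ (n + 1) / x)
      = fun n : ℕ => ((n : ℝ) + 1) * ch n * x ^ n := by
    funext n
    have hn : ((n : ℝ) + 1) ≠ 0 := by positivity
    rw [ch, pow_succ]
    field_simp
  rw [hfun] at hs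
  rw [hs.tsum_eq] at hd
  convert hd using 1
  rw [div_div, mul_comm]

lemma d_A {x : ℝ} (hx : x ∈ Ioo (0 : ℝ) 1) :
    HasDerivAt (P cA) (P ch x / x) x := by
  have hx1 := mem_abs_lt hx
  have hx0 : x ≠ 0 := ne_of_gt hx.1
  have hd := P_hasDerivAt cA_bound hx1
  have hs := (P_hasSum ch_bound hx1).div_const x
  have hfun : (fun n : ℕ => ch n * x ^ (n + 1) / x)
      = fun n : ℕ => ((n : ℝ) + 1) * cA n * x ^ n := by
    funext n
    have hn : ((n : ℝ) + 1) ≠ 0 := by positivity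
    rw [ch, cA, pow_succ]
    field_simp
  rw [hfun] at hs
  rwa [hs.tsum_eq] at hd

lemma d_logsq {y : ℝ} (hy : y ∈ Ioo (0 : ℝ) 1) :
    HasDerivAt (fun z : ℝ => (Real.log (1 - z)) ^ 2 / 2)
      (Real.log (1 - y) * (-(1 - y)⁻¹)) y := by
  have hy2 : (1 : ℝ) - y ≠ 0 := by intro h; have := hy.2; nlinarith [sub_eq_zero.mp h]
  have hinner : HasDerivAt (fun z : ℝ => (1 : ℝ) - z) (-1) y := by
    simpa using (hasDerivAt_id y).const_sub 1
  have hlog : HasDerivAt (fun z : ℝ => Real.log (1 - z)) ((1 - y)⁻¹ * (-1)) y :=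
    (Real.hasDerivAt_log hy2).comp y hinner
  have hsq := (hlog.fun_pow 2)
  have := hsq.div_const 2
  refine this.congr_deriv ?_
  ring

lemma I1 {x : ℝ} (hx : x ∈ Ioo (0 : ℝ) 1) :
    P ch x = P c2 x + (Real.log (1 - x)) ^ 2 / 2 := by
  have key : (fun y => P ch y - P c2 y - (Real.log (1 - y)) ^ 2 / 2) x = 0 := by
    refine const_from_deriv
      (f := fun y => P ch y - P c2 y - (Real.log (1 - y)) ^ 2 / 2) (c := 0)
      (fun y hy => ?_) ?_ hx
    · have hy0 : y ≠ 0 := ne_of_gt hy.1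
      have hy2 : (1 : ℝ) - y ≠ 0 := by intro h; have := hy.2; nlinarith [sub_eq_zero.mp h]
      have hd := ((d_h hy).fun_sub (d_Li2 hy)).fun_sub (d_logsq hy)
      refine hd.congr_deriv ?_
      field_simp
      ring
    · have h1 : ContinuousAt (P ch) 0 :=
        (P_hasDerivAt ch_bound (by norm_num : |(0:ℝ)| < 1)).continuousAt
      have h2 : ContinuousAt (P c2) 0 :=
        (P_hasDerivAt c2_bound (by norm_num : |(0:ℝ)| < 1)).continuousAt
      have h3 : ContinuousAt (fun y : ℝ => (Real.log (1 - y)) ^ 2 / 2) 0 := by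
        have hcomp : ContinuousAt (fun y : ℝ => Real.log (1 - y)) 0 := by
          have h0 : ContinuousAt (fun y : ℝ => (1 : ℝ) - y) 0 :=
            (continuous_const.sub continuous_id).continuousAt
          have h1 : ContinuousAt Real.log ((1 : ℝ) - 0) :=
            Real.continuousAt_log (by norm_num)
          exact ContinuousAt.comp h1 h0
        exact (hcomp.pow 2).div_const 2
      have hc := ((h1.fun_sub h2).fun_sub h3).tendsto
      have hval : P ch 0 - P c2 0 - (Real.log (1 - 0)) ^ 2 / 2 = 0 := by
        rw [P_zero, P_zero]; simp
      rw [hval] at hc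
      exact hc.mono_left nhdsWithin_le_nhds
  simp only at key
  linarith

lemma habs_c2 : Summable (fun n : ℕ => |c2 n|) := by
  have h := (summable_one_div_nat_pow (p := 2)).mpr (by norm_num)
  have h2 := (summable_nat_add_iff (f := fun n : ℕ => 1 / (n : ℝ) ^ 2) 1).mpr h
  refine h2.congr fun n => ?_
  rw [c2, abs_of_nonneg (by positivity)]
  push_cast
  ring

lemma habs_c3 : Summable (fun n : ℕ => |c3 n|) := by
  have h := (summable_one_div_nat_pow (p := 3)).mpr (by norm_num)
  have h2 := (summable_nat_add_iff (f := fun n : ℕ => 1 / (n : ℝ) ^ 3) 1).mpr h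
  refine h2.congr fun n => ?_
  rw [c3, abs_of_nonneg (by positivity)]
  push_cast
  ring

lemma arg_tendsto : Tendsto (fun y : ℝ => 1 - y) (𝓝[>] (0:ℝ)) (𝓝[Icc (-1:ℝ) 1] 1) := by
  rw [tendsto_nhdsWithin_iff]
  constructor
  · have h : Tendsto (fun y : ℝ => 1 - y) (𝓝 (0:ℝ)) (𝓝 ((1:ℝ) - 0)) :=
      ((continuous_const.sub continuous_id).tendsto 0)
    have h2 := h.mono_left (nhdsWithin_le_nhds (s := Ioi (0:ℝ)))
    simpa using h2
  · filter_upwards [Ioo_mem_nhdsGT_of_mem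
      (⟨le_refl (0:ℝ), one_pos⟩ : (0:ℝ) ∈ Ico (0:ℝ) 1)] with y hy
    exact ⟨by linarith [hy.2], by linarith [hy.1]⟩

lemma main_eval :
    P cA (1/2) = P c3 1 - P c2 (1/2) * Real.log 2 - (Real.log 2) ^ 3 / 2 := by
  have key : (fun y => P cA y - P c3 y + P c3 (1 - y) - P c2 (1 - y) * Real.log (1 - y)
      - 1/2 * (Real.log y * (Real.log (1 - y)) ^ 2)) (1/2) = P c3 1 := by
    refine const_from_deriv
      (f := fun y => P cA y - P c3 y + P c3 (1 - y) - P c2 (1 - y) * Real.log (1 - y)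
        - 1/2 * (Real.log y * (Real.log (1 - y)) ^ 2))
      (c := P c3 1) (fun y hy => ?_) ?_ (by norm_num)
    · -- derivative is zero
      have hy0 : y ≠ 0 := ne_of_gt hy.1
      have hy2 : (1 : ℝ) - y ≠ 0 := by intro h; have := hy.2; nlinarith [sub_eq_zero.mp h]
      have hy' : (1 : ℝ) - y ∈ Ioo (0:ℝ) 1 := ⟨by linarith [hy.2], by linarith [hy.1]⟩
      have hinner : HasDerivAt (fun z : ℝ => (1 : ℝ) - z) (-1) y := by
        simpa using (hasDerivAt_id y).const_sub 1
      have h3c : HasDerivAt (fun z : ℝ => P c3 (1 - z))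
          (P c2 (1 - y) / (1 - y) * (-1)) y := (d_Li3 hy').comp y hinner
      have h2c : HasDerivAt (fun z : ℝ => P c2 (1 - z))
          (-Real.log (1 - (1 - y)) / (1 - y) * (-1)) y := (d_Li2 hy').comp y hinner
      have hlogc : HasDerivAt (fun z : ℝ => Real.log (1 - z)) ((1 - y)⁻¹ * (-1)) y :=
        (Real.hasDerivAt_log hy2).comp y hinner
      have hprod := h2c.fun_mul hlogc
      have hsq : HasDerivAt (fun z : ℝ => (Real.log (1 - z)) ^ 2)
          (2 * (Real.log (1 - y)) ^ 1 * ((1 - y)⁻¹ * (-1))) y := hlogc.fun_pow 2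
      have hlogy := Real.hasDerivAt_log hy0
      have hlast := (hlogy.fun_mul hsq).const_mul (1/2 : ℝ)
      have hd := ((((d_A hy).fun_sub (d_Li3 hy)).fun_add h3c).fun_sub hprod).fun_sub hlast
      refine hd.congr_deriv ?_
      rw [show (1 : ℝ) - (1 - y) = y by ring]
      rw [I1 hy]
      field_simp
      ring
    · -- limit at 0⁺ is P c3 1
      have t1 : Tendsto (P cA) (𝓝[>] (0:ℝ)) (𝓝 0) := by
        have := (P_hasDerivAt cA_bound (by norm_num : |(0:ℝ)| < 1)).continuousAt.tendsto
        rw [P_zero] at this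
        exact this.mono_left nhdsWithin_le_nhds
      have t2 : Tendsto (P c3) (𝓝[>] (0:ℝ)) (𝓝 0) := by
        have := (P_hasDerivAt c3_bound (by norm_num : |(0:ℝ)| < 1)).continuousAt.tendsto
        rw [P_zero] at this
        exact this.mono_left nhdsWithin_le_nhds
      have t3 : Tendsto (fun y : ℝ => P c3 (1 - y)) (𝓝[>] (0:ℝ)) (𝓝 (P c3 1)) := by
        have hcw : ContinuousWithinAt (P c3) (Icc (-1:ℝ) 1) 1 :=
          (P_continuousOn habs_c3) 1 (right_mem_Icc.mpr (by norm_num))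
        exact hcw.tendsto.comp arg_tendsto
      have t4a : Tendsto (fun y : ℝ => P c2 (1 - y)) (𝓝[>] (0:ℝ)) (𝓝 (P c2 1)) := by
        have hcw : ContinuousWithinAt (P c2) (Icc (-1:ℝ) 1) 1 :=
          (P_continuousOn habs_c2) 1 (right_mem_Icc.mpr (by norm_num))
        exact hcw.tendsto.comp arg_tendsto
      have t4b : Tendsto (fun y : ℝ => Real.log (1 - y)) (𝓝[>] (0:ℝ)) (𝓝 0) := by
        have harg2 : Tendsto (fun y : ℝ => (1:ℝ) - y) (𝓝[>] (0:ℝ)) (𝓝 (1:ℝ)) :=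
          arg_tendsto.mono_right nhdsWithin_le_nhds
        have hlog1 : Tendsto Real.log (𝓝 (1:ℝ)) (𝓝 (Real.log 1)) :=
          (Real.continuousAt_log one_ne_zero).tendsto
        rw [Real.log_one] at hlog1
        exact hlog1.comp harg2
      have t5 := log_log_sq_tendsto.const_mul (1/2 : ℝ)
      have total := ((((t1.sub t2).add t3).sub (t4a.mul t4b)).sub t5)
      convert total using 2
      ring
  simp only at key
  rw [show (1:ℝ) - 1/2 = 1/2 by norm_num] at key
  rw [show Real.log ((1:ℝ)/2) = -Real.log 2 by rw [one_div, Real.log_inv]] at key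
  ring_nf at key ⊢
  linarith

noncomputable def deltaD (s t : ℕ) : ℝ :=
  ∑' n : ℕ, ∑' m : ℕ,
    if 0 < m ∧ m < n then (1/2 : ℝ) ^ n / ((n : ℝ) ^ s * (m : ℝ) ^ t) else 0

lemma summable_half_div_pow (p : ℕ) : Summable (fun n : ℕ => (1/2:ℝ)^n / (n:ℝ)^p) := by
  refine Summable.of_norm_bounded (g := fun n => (1/2:ℝ)^n)
    (summable_geometric_of_lt_one (by norm_num) (by norm_num)) fun n => ?_
  cases n with
  | zero => cases p <;> norm_num
  | succ m =>
    have hm : (1:ℝ) ≤ ((m:ℝ)+1)^p := one_le_pow₀ (by nlinarith [Nat.cast_nonneg (α := ℝ) m])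
    rw [Real.norm_eq_abs, abs_of_nonneg (by positivity)]
    push_cast
    exact div_le_self (by positivity) hm

lemma tsum_half_pow (q : ℕ) :
    ∑' n : ℕ, (1/2:ℝ)^n / (n:ℝ)^(q+1)
      = ∑' n : ℕ, (1/2:ℝ)^(n+1) / ((n:ℝ)+1)^(q+1) := by
  rw [Summable.tsum_eq_zero_add (summable_half_div_pow (q+1))]
  rw [show ((1:ℝ)/2)^(0:ℕ) / ((0:ℕ):ℝ)^(q+1) = 0 by norm_num, zero_add]
  refine tsum_congr fun n => ?_
  push_cast
  ring

lemma hS2 : ∑' n : ℕ, (1/2:ℝ)^n / (n:ℝ)^2 = P c2 (1/2) := by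
  rw [show (2:ℕ) = 1+1 from rfl, tsum_half_pow 1]
  simp only [P]
  refine tsum_congr fun n => ?_
  rw [c2]
  ring

lemma hS3 : ∑' n : ℕ, (1/2:ℝ)^n / (n:ℝ)^3 = P c3 (1/2) := by
  rw [show (3:ℕ) = 2+1 from rfl, tsum_half_pow 2]
  simp only [P]
  refine tsum_congr fun n => ?_
  rw [c3]
  ring

lemma hzeta : ∑' n : ℕ, 1 / (n:ℝ)^3 = P c3 1 := by
  have hs : Summable (fun n : ℕ => 1 / (n:ℝ)^3) :=
    summable_one_div_nat_pow.mpr (by norm_num)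
  rw [Summable.tsum_eq_zero_add hs, zeta3_def]
  rw [show (1:ℝ) / ((0:ℕ):ℝ)^3 = 0 by norm_num, zero_add]
  refine tsum_congr fun n => ?_
  push_cast
  ring

lemma summable_v : Summable (fun n : ℕ => (1/2:ℝ)^n * Hm (n-1) / (n:ℝ)^2) := by
  refine Summable.of_norm_bounded (g := fun n => (1/2:ℝ)^n)
    (summable_geometric_of_lt_one (by norm_num) (by norm_num)) fun n => ?_
  cases n with
  | zero => simp [Hm]
  | succ k =>
    rw [Real.norm_eq_abs,
      abs_of_nonneg (div_nonneg (mul_nonneg (by positivity) (Hm_nonneg _)) (by positivity))]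
    have h3 : Hm (k+1-1) / (((k+1:ℕ)):ℝ)^2 ≤ 1 := by
      rw [div_le_one (by positivity), show k + 1 - 1 = k from rfl]
      have h := Hm_le k
      push_cast
      nlinarith [Hm_nonneg k, Nat.cast_nonneg (α := ℝ) k]
    calc ((1:ℝ)/2)^(k+1) * Hm (k+1-1) / (((k+1:ℕ)):ℝ)^2
        = (1/2:ℝ)^(k+1) * (Hm (k+1-1) / (((k+1:ℕ)):ℝ)^2) := by ring
      _ ≤ (1/2:ℝ)^(k+1) * 1 := mul_le_mul_of_nonneg_left h3 (by positivity)
      _ = (1/2:ℝ)^(k+1) := mul_one _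



lemma hdelta : deltaD 2 1 = ∑' n : ℕ, (1/2:ℝ)^n * Hm (n-1) / (n:ℝ)^2 := by
  unfold deltaD
  refine tsum_congr fun n => ?_
  rw [tsum_eq_sum (s := Finset.range n)
    (fun m hm => if_neg (fun hc => hm (Finset.mem_range.mpr hc.2)))]
  cases n with
  | zero => simp
  | succ k =>
    rw [Finset.sum_range_succ']
    simp only [lt_irrefl, false_and, if_false, add_zero, Nat.lt_irrefl]
    rw [show k + 1 - 1 = k from rfl]
    rw [Hm, Finset.mul_sum, Finset.sum_div]
    refine Finset.sum_congr rfl fun i hi => ?_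
    rw [if_pos ⟨Nat.succ_pos i, Nat.succ_lt_succ (Finset.mem_range.mp hi)⟩]
    have h1 : ((k:ℝ)+1) ≠ 0 := by positivity
    have h2 : ((i:ℝ)+1) ≠ 0 := by positivity
    push_cast
    field_simp

lemma hcomb : deltaD 2 1 + P c3 (1/2) = P cA (1/2) := by
  have hw : Summable (fun n : ℕ => (1/2:ℝ)^(n+1) * Hm n / ((n:ℝ)+1)^2) := by
    have := (summable_nat_add_iff
      (f := fun n : ℕ => (1/2:ℝ)^n * Hm (n-1) / (n:ℝ)^2) 1).mpr summable_v
    refine this.congr fun n => ?_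
    push_cast
    norm_num
  have hc3s : Summable (fun n : ℕ => c3 n * (1/2:ℝ)^(n+1)) :=
    P_summable c3_bound (by rw [abs_of_pos (by norm_num : (0:ℝ) < 1/2)]; norm_num)
  have hshift : deltaD 2 1 = ∑' n : ℕ, (1/2:ℝ)^(n+1) * Hm n / ((n:ℝ)+1)^2 := by
    rw [hdelta, Summable.tsum_eq_zero_add summable_v]
    rw [show ((1:ℝ)/2)^(0:ℕ) * Hm (0-1) / ((0:ℕ):ℝ)^2 = 0 by simp [Hm], zero_add]
    refine tsum_congr fun n => ?_
    push_cast
    norm_num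
  rw [hshift]
  simp only [P]
  rw [← Summable.tsum_add hw hc3s]
  refine tsum_congr fun n => ?_
  rw [cA, c3, Hm_succ]
  have h1 : ((n:ℝ)+1) ≠ 0 := by positivity
  field_simp

theorem holder_wt3 :
    ∑' n : ℕ, 1 / (n : ℝ) ^ 3
      = deltaD 2 1 + (Real.log 2) ^ 3 / 2
        + (∑' n : ℕ, (1/2 : ℝ) ^ n / (n : ℝ) ^ 2) * Real.log 2
        + ∑' n : ℕ, (1/2 : ℝ) ^ n / (n : ℝ) ^ 3 := by
  rw [hzeta, hS2, hS3]
  have h4 := hcomb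
  have h5 := main_eval
  linarith
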